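/- Let H be a nonzero additive subgroup of ℚ, K a torsion-free abelian group, and G = H × K with positive cone G⁺ = {(h,k) : h > 0} ∪ {(0,0)}. If φ : G → ℝ is an additive group homomorphism with φ(g) ≥ 0 for every g ∈ G⁺, then there exists a real number c ≥ 0 such that φ(h,k) = c·h for all (h,k) ∈ G (where h ∈ H ⊆ ℚ ⊆ ℝ); in particular φ(0,k) = 0 for every k ∈ K. -/

import Mathlib

/-- Uniqueness of the state on `G = H ⊕ K`: every positive additive
homomorphism `φ : G → ℝ` is a nonnegative multiple of the projection
`(h, k) ↦ h`; in particular `φ` vanishes on `K`. -/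
theorem statement13
    (H : AddSubgroup ℚ) (hH : H ≠ ⊥)
    (K : Type*) [AddCommGroup K] [NoZeroSMulDivisors ℤ K]
    (φ : H × K →+ ℝ)
    (hφ : ∀ g ∈ ({g : H × K | 0 < (g.1 : ℚ)} ∪ {0} : Set (H × K)), 0 ≤ φ g) :
    ∃ c : ℝ, 0 ≤ c ∧ (∀ g : H × K, φ g = c * ((g.1 : ℚ) : ℝ)) ∧
      ∀ k : K, φ (0, k) = 0 := by
  have pos : ∀ g : H × K, 0 < (g.1 : ℚ) → 0 ≤ φ g := fun g hg => hφ g (Or.inl hg)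
  -- find a positive element of H
  obtain ⟨x, hx0⟩ : ∃ x : H, (0 : ℚ) < (x : ℚ) := by
    obtain ⟨y, hy⟩ := (AddSubgroup.ne_bot_iff_exists_ne_zero).mp hH
    rcases lt_or_gt_of_ne (show (y : ℚ) ≠ 0 by
      simpa [ZeroMemClass.coe_eq_zero] using hy) with h | h
    · exact ⟨-y, by simpa using neg_pos.mpr h⟩
    · exact ⟨y, h⟩
  -- φ vanishes on K
  have key : ∀ k : K, 0 ≤ φ (0, k) := by
    intro k
    by_contra hlt
    push_neg at hlt
    set ε : ℝ := -φ (0, k) with hε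
    have hεpos : 0 < ε := by simp [hε]; linarith
    obtain ⟨n, hn⟩ := exists_nat_gt (φ (x, 0) / ε)
    have h1 : 0 ≤ φ (x, (n : ℤ) • k) := pos _ (by simpa using hx0)
    have h2 : φ (x, (n : ℤ) • k) = φ (x, 0) + (n : ℝ) * φ (0, k) := by
      have hdec : ((x, (n : ℤ) • k) : H × K) = (x, 0) + (n : ℤ) • (0, k) := by
        simp [Prod.ext_iff]
      rw [hdec, map_add, map_zsmul, zsmul_eq_mul]
      push_cast
      ring
    have hn' : φ (x, 0) < n * ε := (div_lt_iff₀ hεpos).mp hn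
    rw [h2] at h1
    have : (n : ℝ) * φ (0, k) = -(n * ε) := by rw [hε]; ring
    linarith [this ▸ h1]
  have kzero : ∀ k : K, φ (0, k) = 0 := by
    intro k
    have h1 := key k
    have h2 := key (-k)
    have h3 : φ (0, -k) = -φ (0, k) := by
      have h4 : ((0, -k) : H × K) = -(0, k) := by simp [Prod.ext_iff]
      rw [h4, map_neg]
    linarith
  -- the constant
  set a : ℝ := φ (x, 0) with ha
  have hapos : 0 ≤ a := pos _ (by simpa using hx0)
  refine ⟨a / ((x : ℚ) : ℝ), div_nonneg hapos (by exact_mod_cast hx0.le), ?_, kzero⟩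
  intro g
  -- decompose g
  have hdec : g = (g.1, 0) + (0, g.2) := by simp [Prod.ext_iff]
  have hsplit : φ g = φ (g.1, 0) := by
    nth_rewrite 1 [hdec]; rw [map_add, kzero, add_zero]
  rw [hsplit]
  set h : H := g.1 with hdefh
  set r : ℚ := (h : ℚ) / (x : ℚ) with hr
  clear_value r
  have hxne : (x : ℚ) ≠ 0 := ne_of_gt hx0
  have hden : ((r.den : ℚ)) ≠ 0 := by exact_mod_cast r.pos.ne'
  have hnum : ((r.num : ℚ)) = r * (r.den : ℚ) := by
    have h5 := Rat.num_div_den r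
    rw [div_eq_iff hden] at h5
    exact h5
  have hkey : ((r.den : ℤ) • h : H) = r.num • x := by
    apply Subtype.ext
    push_cast
    rw [zsmul_eq_mul, zsmul_eq_mul]
    have hh : (h : ℚ) = r * (x : ℚ) := by rw [hr, div_mul_cancel₀ _ hxne]
    push_cast [hh]
    linear_combination (norm := (push_cast; ring1)) (-(x : ℚ)) * hnum
  have hφkey : ((r.den : ℤ)) • φ (h, 0) = r.num • φ (x, 0) := by
    rw [← map_zsmul, ← map_zsmul]
    congr 1
    simp [Prod.ext_iff, hkey]
  have hdne : ((r.den : ℝ)) ≠ 0 := by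
    exact_mod_cast (Nat.cast_ne_zero (R := ℝ)).mpr r.pos.ne'
  have : ((r.den : ℝ)) * φ (h, 0) = (r.num : ℝ) * a := by
    simpa [zsmul_eq_mul, ha] using hφkey
  have hrcast : ((r : ℚ) : ℝ) = (r.num : ℝ) / (r.den : ℝ) := by
    exact Rat.cast_def r
  have hh' : ((h : ℚ) : ℝ) = ((r : ℚ) : ℝ) * ((x : ℚ) : ℝ) := by
    have : (h : ℚ) = r * (x : ℚ) := by rw [hr, div_mul_cancel₀ _ hxne]
    exact_mod_cast congrArg (fun q : ℚ => (q : ℝ)) this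
  have hxne' : ((x : ℚ) : ℝ) ≠ 0 := by exact_mod_cast hxne
  have hφh : φ (h, 0) = (r.num : ℝ) * a / (r.den : ℝ) := by
    rw [eq_div_iff hdne]; linarith [this]
  rw [hφh, hh', hrcast]
  field_simp
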